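/- Let γ, δ ∈ P(X) be of type rro, let η be a maximal right ray in γ and ξ a maximal right ray in δ such that ⟨ξ^δ_n⟩ dominates ⟨η^γ_n⟩. Then for every maximal right ray η₁ in γ and every maximal right ray ξ₁ in δ, the sequence ⟨(ξ₁)^δ_n⟩ dominates the sequence ⟨(η₁)^γ_n⟩. -/

import Mathlib

namespace ConjPaper

open Classical

/-- Partial transformations of `X`. -/
abbrev PT (X : Type*) := X → Option X

variable {X : Type*}

/-- Left-to-right composition: `x(αφ) = (xα)φ`. -/
def pcomp (α φ : PT X) : PT X := fun x => (α x).bind φ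

/-- The zero of `P(X)`: the empty transformation. -/
def pzero : PT X := fun _ => none

/-- The identity of `P(X)`. -/
def pid : PT X := fun x => some x

/-- The domain of a partial transformation. -/
def pdom (α : PT X) : Set X := {x | α x ≠ none}

/-- The image of a partial transformation. -/
def pim (α : PT X) : Set X := {y | ∃ x, α x = some y}

/-- The span: `dom(α) ∪ im(α)`. -/
def pspan (α : PT X) : Set X := pdom α ∪ pim α

/-- Iterates `γ^k` of a partial transformation (`γ^0 = id`). -/
def pit (α : PT X) : ℕ → PT X
  | 0 => pid
  | n + 1 => pcomp (pit α n) α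

/-- `φ` is a restrictive partial homomorphism (rp-homomorphism) from `Γ(α)` to `Γ(β)`:
(a) every arc `x → y` of `Γ(α)` has `x, y ∈ dom(φ)` and `xφ → yφ` an arc of `Γ(β)`;
(b) if `x` is terminal in `Γ(α)` and `x ∈ dom(φ)`, then `xφ` is terminal in `Γ(β)`. -/
def IsRpHom (α β φ : PT X) : Prop :=
  (∀ x y, α x = some y →
    ∃ x' y', φ x = some x' ∧ φ y = some y' ∧ β x' = some y') ∧
  (∀ x x', α x = none → φ x = some x' → β x' = none)

/-- `γ` is connected: `γ ≠ 0` and any two points of `span(γ)` reach a common point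
under nonnegative iterates of `γ`. -/
def Connected (γ : PT X) : Prop :=
  γ ≠ pzero ∧ ∀ x ∈ pspan γ, ∀ y ∈ pspan γ,
    ∃ k m z, pit γ k x = some z ∧ pit γ m y = some z

/-- `γ` has a cycle (of some length `k ≥ 1`). -/
def HasCycleAny (γ : PT X) : Prop := ∃ k, 1 ≤ k ∧ ∃ x, pit γ k x = some x

/-- A right ray in `γ`: pairwise distinct `x₀, x₁, x₂, …` with `xₙγ = xₙ₊₁`. -/
def IsRightRay (γ : PT X) (f : ℕ → X) : Prop :=
  Function.Injective f ∧ ∀ n, γ (f n) = some (f (n + 1))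

/-- A maximal right ray: a right ray with `x₀ ∉ im(γ)`. -/
def IsMaxRightRay (γ : PT X) (f : ℕ → X) : Prop :=
  IsRightRay γ f ∧ f 0 ∉ pim γ

/-- A double ray in `γ`: pairwise distinct `(xᵢ)_{i ∈ ℤ}` with `xᵢγ = xᵢ₊₁`. -/
def IsDoubleRay (γ : PT X) (f : ℤ → X) : Prop :=
  Function.Injective f ∧ ∀ i, γ (f i) = some (f (i + 1))

/-- A left ray in `γ`: pairwise distinct `…, x₂, x₁, x₀` with `xₙ₊₁γ = xₙ`. -/
def IsLeftRay (γ : PT X) (f : ℕ → X) : Prop :=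
  Function.Injective f ∧ ∀ n, γ (f (n + 1)) = some (f n)

/-- A chain of length `k ≥ 1` in `γ`: distinct `x₀ → x₁ → ⋯ → x_k`. -/
def IsChain' (γ : PT X) (k : ℕ) (f : ℕ → X) : Prop :=
  1 ≤ k ∧ (∀ i ≤ k, ∀ j ≤ k, f i = f j → i = j) ∧ ∀ i < k, γ (f i) = some (f (i + 1))

/-- A maximal chain: a chain with `x₀ ∉ im(γ)` and `x_k ∉ dom(γ)`. -/
def IsMaxChain' (γ : PT X) (k : ℕ) (f : ℕ → X) : Prop :=
  IsChain' γ k f ∧ f 0 ∉ pim γ ∧ γ (f k) = none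

/-- `γ` is of type cho ("chains only"): connected, contains a maximal chain, but has
no cycles and no rays of any kind. -/
def IsCho (γ : PT X) : Prop :=
  Connected γ ∧ (∃ k f, IsMaxChain' γ k f) ∧ ¬HasCycleAny γ ∧
    (∀ f, ¬IsRightRay γ f) ∧ (∀ f, ¬IsDoubleRay γ f) ∧ (∀ f, ¬IsLeftRay γ f)

/-- `γ` is of type rro ("right rays only"): connected, contains a maximal right ray,
but has no cycles, no double rays, no left rays, and no maximal chains. -/
def IsRro (γ : PT X) : Prop :=
  Connected γ ∧ (∃ f, IsMaxRightRay γ f) ∧ ¬HasCycleAny γ ∧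
    (∀ f, ¬IsDoubleRay γ f) ∧ (∀ f, ¬IsLeftRay γ f) ∧ (∀ k f, ¬IsMaxChain' γ k f)

/-- The ordinal rank `ρ_γ(x)` of `x` with respect to the relation
`R_γ = {(y, x) : yγ = x}` (which is well founded in all cases of interest;
for definiteness the value is `0` if `R_γ` is not well founded). -/
noncomputable def prank (γ : PT X) (x : X) : Ordinal :=
  if h : WellFounded (fun y z : X => γ y = some z) then (h.apply x).rank else 0

/-- `⟨bₙ⟩` dominates `⟨aₙ⟩`: there is `k ≥ 0` with `aₙ ≤ b_{k+n}` for all `n`. -/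
def Dominates (b a : ℕ → Ordinal) : Prop := ∃ k, ∀ n, a n ≤ b (k + n)

section Aux
variable {X : Type*}

lemma pit_ray (γ : PT X) (f : ℕ → X) (hf : ∀ n, γ (f n) = some (f (n + 1))) :
    ∀ n m, pit γ n (f m) = some (f (m + n)) := by
  intro n
  induction n with
  | zero => intro m; rfl
  | succ n ih =>
    intro m
    show (pit γ n (f m)).bind γ = _
    rw [ih m]
    simpa [← Nat.add_assoc] using hf (m + n)

lemma ray_merge (γ : PT X) (hγ : Connected γ) (f g : ℕ → X)
    (hf : ∀ n, γ (f n) = some (f (n + 1))) (hg : ∀ n, γ (g n) = some (g (n + 1))) :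
    ∃ k m, ∀ n, f (k + n) = g (m + n) := by
  have hfs : f 0 ∈ pspan γ := Or.inl (by simp [pdom, hf 0])
  have hgs : g 0 ∈ pspan γ := Or.inl (by simp [pdom, hg 0])
  obtain ⟨k, m, z, hk, hm⟩ := hγ.2 (f 0) hfs (g 0) hgs
  rw [pit_ray γ f hf k 0] at hk
  rw [pit_ray γ g hg m 0] at hm
  refine ⟨k, m, ?_⟩
  intro n
  induction n with
  | zero => simpa using Option.some.inj (hk.trans hm.symm)
  | succ n ih =>
    have h1 := hf (k + n)
    rw [ih, hg (m + n)] at h1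
    have := Option.some.inj h1
    rw [Nat.add_succ, Nat.add_succ]
    exact this.symm

lemma prank_ray_mono (γ : PT X) (f : ℕ → X)
    (hf : ∀ n, γ (f n) = some (f (n + 1))) {i j : ℕ} (h : i ≤ j) :
    prank γ (f i) ≤ prank γ (f j) := by
  by_cases hw : WellFounded (fun y z : X => γ y = some z)
  · induction j with
    | zero => obtain rfl := Nat.le_zero.1 h; rfl
    | succ j ih =>
      rcases Nat.lt_succ_iff_lt_or_eq.1 (Nat.lt_succ_of_le h) with h' | rfl
      · refine le_trans (ih (Nat.lt_succ_iff.1 h')) ?_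
        have hlt := Acc.rank_lt_of_rel (r := fun y z : X => γ y = some z)
          (hw.apply (f (j + 1))) (hf j)
        simp only [prank, dif_pos hw]
        exact le_of_lt hlt
      · rfl
  · simp [prank, dif_neg hw]

end Aux

/-- Lemma 4.30. Let `γ, δ ∈ P(X)` be of type rro, `η` a maximal right
ray in `γ` and `ξ` a maximal right ray in `δ` with `⟨ξ_n^δ⟩` dominating `⟨η_n^γ⟩`. Then
for every maximal right ray `η₁` in `γ` and every maximal right ray `ξ₁` in `δ`,
`⟨(ξ₁)_n^δ⟩` dominates `⟨(η₁)_n^γ⟩`. -/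
theorem rro_dominates_all (γ δ : PT X) (hγ : IsRro γ) (hδ : IsRro δ)
    (η ξ : ℕ → X) (hη : IsMaxRightRay γ η) (hξ : IsMaxRightRay δ ξ)
    (hdom : Dominates (fun n => prank δ (ξ n)) (fun n => prank γ (η n)))
    (η₁ ξ₁ : ℕ → X) (hη₁ : IsMaxRightRay γ η₁) (hξ₁ : IsMaxRightRay δ ξ₁) :
    Dominates (fun n => prank δ (ξ₁ n)) (fun n => prank γ (η₁ n)) := by
  by_cases hw : WellFounded (fun y z : X => γ y = some z)
  · obtain ⟨k1, m1, hmerge1⟩ := ray_merge γ hγ.1 η₁ η hη₁.1.2 hη.1.2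
    obtain ⟨k2, m2, hmerge2⟩ := ray_merge δ hδ.1 ξ ξ₁ hξ.1.2 hξ₁.1.2
    obtain ⟨k, hk⟩ := hdom
    refine ⟨m2 + k + m1, fun n => ?_⟩
    calc prank γ (η₁ n) ≤ prank γ (η₁ (k1 + n)) :=
          prank_ray_mono γ η₁ hη₁.1.2 (Nat.le_add_left n k1)
      _ = prank γ (η (m1 + n)) := by rw [hmerge1 n]
      _ ≤ prank δ (ξ (k + (m1 + n))) := hk (m1 + n)
      _ ≤ prank δ (ξ (k2 + (k + (m1 + n)))) :=
          prank_ray_mono δ ξ hξ.1.2 (Nat.le_add_left _ k2)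
      _ = prank δ (ξ₁ (m2 + (k + (m1 + n)))) := by rw [hmerge2 (k + (m1 + n))]
      _ = prank δ (ξ₁ (m2 + k + m1 + n)) := by ring_nf
  · exact ⟨0, fun n => by simp [prank, dif_neg hw]⟩


end ConjPaper
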